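/- Let g : ℝ^m → ℝ be μ_g-strongly convex and L_g-smooth with 0 < μ_g ≤ L_g, and let A ∈ ℝ^{m×n} have full column rank, i.e., μ_A = λ_min(AᵀA) > 0. Let f : ℝ^n → ℝ ∪ {∞} be proper, convex, closed. Then the saddle-point operator F(x,y) = (∂f(x)+Aᵀy, ∇g(y)-Ax) is (1/R₂)-inverse Lipschitz for some R₂ > 0; i.e., there exists c > 0 such that ‖v-v'‖ ≥ c‖(x,y)-(x',y')‖ whenever v ∈ F(x,y), v' ∈ F(x',y'). -/

import Mathlib

noncomputable section
open Matrix

abbrev Evec (n : ℕ) := EuclideanSpace ℝ (Fin n)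

noncomputable def qform {ι : Type*} [Fintype ι] [DecidableEq ι]
    (M : Matrix ι ι ℝ) (v : EuclideanSpace ℝ ι) : ℝ :=
  inner ℝ (Matrix.toEuclideanLin M v) v

/-- The smallest eigenvalue of a symmetric matrix, via the Rayleigh quotient. -/
noncomputable def lambdaMin {ι : Type*} [Fintype ι] [DecidableEq ι]
    (M : Matrix ι ι ℝ) : ℝ :=
  ⨅ v : Metric.sphere (0 : EuclideanSpace ℝ ι) 1, qform M (v : EuclideanSpace ℝ ι)

/-- The convex subdifferential of an extended-real-valued function. -/
def subdiff {n : ℕ} (f : Evec n → EReal) (x : Evec n) : Set (Evec n) :=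
  {v | ∀ z, f x + (((inner ℝ v (z - x) : ℝ)) : EReal) ≤ f z}

/-! ### Auxiliary lemmas -/

lemma adj_inner {m n : ℕ} (A : Matrix (Fin m) (Fin n) ℝ) (u : Evec m) (v : Evec n) :
    (inner ℝ (Matrix.toEuclideanLin Aᵀ u) v : ℝ) = inner ℝ u (Matrix.toEuclideanLin A v) := by
  have h : Aᵀ = Aᴴ := by ext i j; simp [Matrix.conjTranspose]
  rw [h, Matrix.toEuclideanLin_conjTranspose_eq_adjoint, LinearMap.adjoint_inner_left]

lemma qform_eq {m n : ℕ} (A : Matrix (Fin m) (Fin n) ℝ) (v : Evec n) :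
    qform (Aᵀ * A) v = ‖Matrix.toEuclideanLin A v‖ ^ 2 := by
  have h : Matrix.toEuclideanLin (Aᵀ * A) v
      = Matrix.toEuclideanLin Aᵀ (Matrix.toEuclideanLin A v) := by
    simp [Matrix.toEuclideanLin_apply, Matrix.mulVec_mulVec]
  rw [qform, h, adj_inner, real_inner_self_eq_norm_sq]

lemma qform_smul {ι : Type*} [Fintype ι] [DecidableEq ι]
    (M : Matrix ι ι ℝ) (c : ℝ) (v : EuclideanSpace ℝ ι) :
    qform M (c • v) = c ^ 2 * qform M v := by
  simp only [qform, _root_.map_smul, real_inner_smul_left, real_inner_smul_right,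
    smul_eq_mul]
  ring

lemma qform_bddBelow {ι : Type*} [Fintype ι] [DecidableEq ι] (M : Matrix ι ι ℝ) :
    BddBelow (Set.range fun w : Metric.sphere (0 : EuclideanSpace ℝ ι) 1 =>
      qform M (w : EuclideanSpace ℝ ι)) := by
  have h1 : Continuous fun v : EuclideanSpace ℝ ι => Matrix.toEuclideanLin M v :=
    LinearMap.continuous_of_finiteDimensional _
  have hc : Continuous fun v : EuclideanSpace ℝ ι => qform M v := h1.inner continuous_id
  have hcomp : IsCompact (Metric.sphere (0 : EuclideanSpace ℝ ι) 1) := isCompact_sphere _ _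
  have himg : BddBelow ((fun v : EuclideanSpace ℝ ι => qform M v) ''
      Metric.sphere (0 : EuclideanSpace ℝ ι) 1) :=
    hcomp.bddBelow_image hc.continuousOn
  have hrange : Set.range (fun w : Metric.sphere (0 : EuclideanSpace ℝ ι) 1 =>
        qform M (w : EuclideanSpace ℝ ι))
      = (fun v : EuclideanSpace ℝ ι => qform M v) ''
        Metric.sphere (0 : EuclideanSpace ℝ ι) 1 := by
    rw [show (fun w : Metric.sphere (0 : EuclideanSpace ℝ ι) 1 =>
        qform M (w : EuclideanSpace ℝ ι))
      = (fun v : EuclideanSpace ℝ ι => qform M v) ∘ Subtype.val from rfl,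
      Set.range_comp, Subtype.range_coe]
  rwa [hrange]

lemma lambdaMin_mul_le {ι : Type*} [Fintype ι] [DecidableEq ι]
    (M : Matrix ι ι ℝ) (v : EuclideanSpace ℝ ι) :
    lambdaMin M * ‖v‖ ^ 2 ≤ qform M v := by
  rcases eq_or_ne v 0 with rfl | hv
  · simp [qform]
  · have hn : (0 : ℝ) < ‖v‖ := norm_pos_iff.mpr hv
    have hu : ‖(‖v‖⁻¹ • v)‖ = 1 := by
      simp [norm_smul, abs_of_nonneg, inv_mul_cancel₀ hn.ne']
    have hle : lambdaMin M ≤ qform M (‖v‖⁻¹ • v) := by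
      refine ciInf_le (qform_bddBelow M) (⟨‖v‖⁻¹ • v, ?_⟩ :
        Metric.sphere (0 : EuclideanSpace ℝ ι) 1)
      simp [mem_sphere_zero_iff_norm, hu]
    rw [qform_smul] at hle
    have h3 := mul_le_mul_of_nonneg_right hle (sq_nonneg ‖v‖)
    calc lambdaMin M * ‖v‖ ^ 2 ≤ (‖v‖⁻¹ ^ 2 * qform M v) * ‖v‖ ^ 2 := h3
      _ = qform M v := by field_simp

lemma subdiff_mono {n : ℕ} (f : Evec n → EReal) (hbot : ∀ x, f x ≠ ⊥)
    (htop : ∃ x, f x ≠ ⊤) {x x' vx vx' : Evec n}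
    (h : vx ∈ subdiff f x) (h' : vx' ∈ subdiff f x') :
    (0 : ℝ) ≤ inner ℝ (vx - vx') (x - x') := by
  obtain ⟨z, hz⟩ := htop
  have hx : f x ≠ ⊤ := by
    intro htop'
    have := h z
    rw [htop'] at this
    rw [EReal.top_add_of_ne_bot (by simp)] at this
    exact hz (top_le_iff.mp this)
  have hx' : f x' ≠ ⊤ := by
    intro htop'
    have := h' z
    rw [htop'] at this
    rw [EReal.top_add_of_ne_bot (by simp)] at this
    exact hz (top_le_iff.mp this)
  have ha : f x = ((f x).toReal : EReal) := (EReal.coe_toReal hx (hbot x)).symm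
  have hb : f x' = ((f x').toReal : EReal) := (EReal.coe_toReal hx' (hbot x')).symm
  have h1 := h x'
  have h2 := h' x
  rw [ha, hb, ← EReal.coe_add, EReal.coe_le_coe_iff] at h1
  rw [ha, hb, ← EReal.coe_add, EReal.coe_le_coe_iff] at h2
  have key : (inner ℝ (vx - vx') (x - x') : ℝ)
      = - (inner ℝ vx (x' - x) : ℝ) - (inner ℝ vx' (x - x') : ℝ) := by
    rw [inner_sub_left, show x' - x = -(x - x') from by abel, inner_neg_right]
    ring
  rw [key]
  linarith

lemma scalar_bound (μg Lg r E K p q s t : ℝ) (hμg : 0 < μg) (hLg0 : 0 < Lg)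
    (hr0 : 0 < r) (hμr : 0 < μg * r)
    (hE' : E * (μg * r) = Lg + r + 1 + μg * r) (hE1 : 1 ≤ E)
    (hKdef : K = 2 * (E ^ 2 + ((Lg * E + 1) / r) ^ 2))
    (hp : 0 ≤ p) (hq : 0 ≤ q) (hs : 0 ≤ s) (ht : 0 ≤ t)
    (key1 : μg * q ^ 2 ≤ s * p + t * q) (key2 : r * p ≤ Lg * q + t) :
    p ^ 2 + q ^ 2 ≤ K * (s ^ 2 + t ^ 2) := by
  have hqb : q ≤ E * (s + t) := by
    rcases le_or_gt q (s + t) with h | h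
    · nlinarith [mul_nonneg (sub_nonneg.mpr hE1) (add_nonneg hs ht)]
    · have hq0 : 0 < q := lt_of_le_of_lt (by positivity) h
      have h1 : μg * r * q ^ 2 ≤ Lg * s * q + s * t + r * t * q := by nlinarith
      have h2 : μg * r * q ≤ (Lg + 1 + r) * (s + t) := by
        nlinarith [mul_nonneg hs ht, mul_nonneg hs hq0.le, mul_nonneg ht hq0.le]
      have h3 : (Lg + 1 + r) * (s + t) ≤ E * (μg * r) * (s + t) := by
        rw [hE']; nlinarith [mul_nonneg hμr.le (add_nonneg hs ht)]
      have h4 := le_trans h2 h3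
      nlinarith [h4, hμr]
  have hpb : p ≤ ((Lg * E + 1) / r) * (s + t) := by
    rw [div_mul_eq_mul_div, le_div_iff₀ hr0]
    nlinarith [mul_le_mul_of_nonneg_left hqb hLg0.le]
  have h1 : p ^ 2 ≤ (((Lg * E + 1) / r) * (s + t)) ^ 2 := pow_le_pow_left₀ hp hpb 2
  have h2 : q ^ 2 ≤ (E * (s + t)) ^ 2 := pow_le_pow_left₀ hq hqb 2
  have h3 : (s + t) ^ 2 ≤ 2 * (s ^ 2 + t ^ 2) := by nlinarith [sq_nonneg (s - t)]
  have hc1 : (0:ℝ) ≤ ((Lg * E + 1) / r) ^ 2 := sq_nonneg _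
  have hc2 : (0:ℝ) ≤ E ^ 2 := sq_nonneg _
  rw [hKdef]
  nlinarith [mul_le_mul_of_nonneg_left h3 hc1, mul_le_mul_of_nonneg_left h3 hc2]

set_option maxHeartbeats 1000000 in
/-- Under condition C2 (`g` strongly convex and smooth, `A` of full column rank),
the saddle-point operator `F(x,y) = (∂f(x) + Aᵀy, ∇g(y) - Ax)` is inverse Lipschitz:
there exists `c = 1/R₂ > 0` bounding `‖F(ω)-F(ω')‖` below by `c‖ω-ω'‖`. -/
theorem saddle_operator_inverseLipschitz_C2
    (n m : ℕ) (μg Lg : ℝ) (hμg : 0 < μg) (hμLg : μg ≤ Lg)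
    (A : Matrix (Fin m) (Fin n) ℝ) (hA : 0 < lambdaMin (Aᵀ * A))
    (f : Evec n → EReal)
    (hproper : (∀ x, f x ≠ ⊥) ∧ ∃ x, f x ≠ ⊤)
    (hconv : ∀ x y (t : ℝ), 0 ≤ t → t ≤ 1 →
      f (t • x + (1 - t) • y) ≤ (t : EReal) * f x + ((1 - t : ℝ) : EReal) * f y)
    (hclosed : LowerSemicontinuous f)
    (g : Evec m → ℝ)
    (hdg : ∀ y, HasGradientAt g (gradient g y) y)
    (hg1 : ∀ y y', μg * ‖y - y'‖ ^ 2 ≤ (inner ℝ (gradient g y - gradient g y') (y - y') : ℝ))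
    (hg2 : ∀ y y', ‖gradient g y - gradient g y'‖ ≤ Lg * ‖y - y'‖) :
    ∃ c > (0 : ℝ), ∀ x x' y y' vx vx', vx ∈ subdiff f x → vx' ∈ subdiff f x' →
      c * Real.sqrt (‖x - x'‖ ^ 2 + ‖y - y'‖ ^ 2) ≤
        Real.sqrt (‖(vx + Matrix.toEuclideanLin Aᵀ y) - (vx' + Matrix.toEuclideanLin Aᵀ y')‖ ^ 2 +
          ‖(gradient g y - Matrix.toEuclideanLin A x) -
            (gradient g y' - Matrix.toEuclideanLin A x')‖ ^ 2) := by
  obtain ⟨hbot, htop⟩ := hproper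
  have hLg0 : 0 < Lg := lt_of_lt_of_le hμg hμLg
  set μA := lambdaMin (Aᵀ * A) with hμAdef
  set r := Real.sqrt μA with hrdef
  have hr0 : 0 < r := Real.sqrt_pos.mpr hA
  have hr2 : r ^ 2 = μA := Real.sq_sqrt hA.le
  set E := (Lg + r + 1 + μg * r) / (μg * r) with hEdef
  have hμr : 0 < μg * r := mul_pos hμg hr0
  have hE' : E * (μg * r) = Lg + r + 1 + μg * r := by
    rw [hEdef]; field_simp
  have hE1 : 1 ≤ E := by
    rw [hEdef, le_div_iff₀ hμr]; nlinarith
  set K := 2 * (E ^ 2 + ((Lg * E + 1) / r) ^ 2) with hKdef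
  have hK0 : 0 < K := by positivity
  have hsK : 0 < Real.sqrt K := Real.sqrt_pos.mpr hK0
  clear_value μA r E K
  refine ⟨1 / Real.sqrt K, by positivity, ?_⟩
  intro x x' y y' vx vx' hvx hvx'
  set dx := x - x' with hdx
  set dy := y - y' with hdy
  set dG := gradient g y - gradient g y' with hdG
  set r1 := (vx + Matrix.toEuclideanLin Aᵀ y) - (vx' + Matrix.toEuclideanLin Aᵀ y') with hr1
  set r2 := (gradient g y - Matrix.toEuclideanLin A x) -
      (gradient g y' - Matrix.toEuclideanLin A x') with hr2d
  have hr1e : r1 = (vx - vx') + Matrix.toEuclideanLin Aᵀ dy := by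
    rw [hr1, hdy, map_sub]; abel
  have hr2e : r2 = dG - Matrix.toEuclideanLin A dx := by
    rw [hr2d, hdG, hdx, map_sub]; abel
  set p := ‖dx‖ with hp'
  set q := ‖dy‖ with hq'
  set s := ‖r1‖ with hs'
  set t := ‖r2‖ with ht'
  have hp : 0 ≤ p := norm_nonneg _
  have hq : 0 ≤ q := norm_nonneg _
  have hs : 0 ≤ s := norm_nonneg _
  have ht : 0 ≤ t := norm_nonneg _
  -- monotonicity of the subdifferential
  have hmono : (0 : ℝ) ≤ inner ℝ (vx - vx') dx := subdiff_mono f hbot htop hvx hvx'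
  have hadj : (inner ℝ (Matrix.toEuclideanLin Aᵀ dy) dx : ℝ)
      = inner ℝ dy (Matrix.toEuclideanLin A dx) := adj_inner A dy dx
  have hcs1 : (inner ℝ r1 dx : ℝ) ≤ s * p := real_inner_le_norm _ _
  have hcs2 : (inner ℝ r2 dy : ℝ) ≤ t * q := real_inner_le_norm _ _
  have hinner1 : (inner ℝ r1 dx : ℝ)
      = inner ℝ (vx - vx') dx + (inner ℝ dy (Matrix.toEuclideanLin A dx) : ℝ) := by
    rw [hr1e, inner_add_left, hadj]
  have hinner2 : (inner ℝ r2 dy : ℝ)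
      = (inner ℝ dG dy : ℝ) - (inner ℝ (Matrix.toEuclideanLin A dx) dy : ℝ) := by
    rw [hr2e, inner_sub_left]
  have hsym : (inner ℝ dy (Matrix.toEuclideanLin A dx) : ℝ)
      = inner ℝ (Matrix.toEuclideanLin A dx) dy := real_inner_comm _ _
  have hg1' : μg * q ^ 2 ≤ (inner ℝ dG dy : ℝ) := hg1 y y'
  have key1 : μg * q ^ 2 ≤ s * p + t * q := by
    rw [hsym] at hinner1; linarith
  -- full column rank bound
  have hAdx : μA * p ^ 2 ≤ ‖Matrix.toEuclideanLin A dx‖ ^ 2 := by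
    rw [hμAdef, hp']
    have := lambdaMin_mul_le (Aᵀ * A) dx
    rwa [qform_eq] at this
  have hAdx2 : ‖Matrix.toEuclideanLin A dx‖ ≤ Lg * q + t := by
    have he : Matrix.toEuclideanLin A dx = dG - r2 := by rw [hr2e]; abel
    rw [he]
    calc ‖dG - r2‖ ≤ ‖dG‖ + ‖r2‖ := norm_sub_le _ _
      _ ≤ Lg * q + t := by have := hg2 y y'; rw [← hdG, ← hdy] at this; linarith
  set a := ‖Matrix.toEuclideanLin A dx‖ with hadef
  have ha0 : 0 ≤ a := norm_nonneg _
  have key2 : r * p ≤ Lg * q + t := by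
    have hsq : (r * p) ^ 2 ≤ a ^ 2 := by rw [mul_pow, hr2]; exact hAdx
    have : r * p ≤ a := by
      have h1 : r * p = Real.sqrt ((r * p) ^ 2) := (Real.sqrt_sq (by positivity)).symm
      rw [h1]
      calc Real.sqrt ((r * p) ^ 2) ≤ Real.sqrt (a ^ 2) := Real.sqrt_le_sqrt hsq
        _ = a := Real.sqrt_sq ha0
    linarith
  have hfin : p ^ 2 + q ^ 2 ≤ K * (s ^ 2 + t ^ 2) :=
    scalar_bound μg Lg r E K p q s t hμg hLg0 hr0 hμr hE' hE1 hKdef hp hq hs ht key1 key2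
  -- conclude
  have hstep : Real.sqrt (p ^ 2 + q ^ 2) ≤ Real.sqrt K * Real.sqrt (s ^ 2 + t ^ 2) := by
    rw [← Real.sqrt_mul hK0.le]
    exact Real.sqrt_le_sqrt hfin
  calc 1 / Real.sqrt K * Real.sqrt (p ^ 2 + q ^ 2)
      ≤ 1 / Real.sqrt K * (Real.sqrt K * Real.sqrt (s ^ 2 + t ^ 2)) := by
        exact mul_le_mul_of_nonneg_left hstep (by positivity)
    _ = Real.sqrt (s ^ 2 + t ^ 2) := by field_simp
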